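/- For a static fluid sphere with nonincreasing average density, positive pressure, regular center (ζ(0) > 0), and satisfying the Einstein equation g(r) = (m(r)+4πp(r)r³)/(r²(1-2m(r)/r)) together with (1/r)√(1-2m/r)·ζ' nonincreasing, the internal compactness obeys 2m(r)/r ≤ (8/9)[1 + √(1+6πp(r)r²)/2 - (1+6πp(r)r²)/2] for all r ∈ (0,R]. -/

import Mathlib

open Real Set

set_option maxHeartbeats 1000000 in
/-- Bound on the internal compactness:
`2m(r)/r ≤ (8/9)[1 + √(1+6πp(r)r²)/2 - (1+6πp(r)r²)/2]`. -/
theorem internal_compactness_bound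
    (R : ℝ) (hR : 0 < R) (m ζ p : ℝ → ℝ)
    (hζcont : ContinuousOn ζ (Icc 0 R))
    (hζc : 0 < ζ 0)
    (hζpos : ∀ r ∈ Ioc (0:ℝ) R, 0 < ζ r)
    (hζdiff : ∀ r ∈ Ioc (0:ℝ) R, DifferentiableAt ℝ ζ r)
    (hppos : ∀ r ∈ Ioc (0:ℝ) R, 0 ≤ p r)
    (hcompact : ∀ r ∈ Ioc (0:ℝ) R, 2 * m r / r < 1)
    (havg : AntitoneOn (fun r => 3 * m r / (4 * π * r ^ 3)) (Ioc 0 R))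
    (heinstein : ∀ r ∈ Ioc (0:ℝ) R,
      deriv ζ r / ζ r = (m r + 4 * π * p r * r ^ 3) / (r ^ 2 * (1 - 2 * m r / r)))
    (hmono : AntitoneOn
      (fun r => (1 / r) * Real.sqrt (1 - 2 * m r / r) * deriv ζ r) (Ioc 0 R)) :
    ∀ r ∈ Ioc (0:ℝ) R,
      2 * m r / r ≤ (8 / 9) *
        (1 + Real.sqrt (1 + 6 * π * p r * r ^ 2) / 2
          - (1 + 6 * π * p r * r ^ 2) / 2) := by
  intro r hrI
  obtain ⟨hr0, hrR⟩ := hrI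
  have hrI : r ∈ Ioc (0:ℝ) R := ⟨hr0, hrR⟩
  have hπ : (0:ℝ) < π := Real.pi_pos
  have hζr : 0 < ζ r := hζpos r hrI
  have hx1 : 2 * m r / r < 1 := hcompact r hrI
  have hp0 : 0 ≤ p r := hppos r hrI
  set x : ℝ := 2 * m r / r with hxdef
  set z : ℝ := 6 * π * p r * r ^ 2 with hzdef
  have hz0 : 0 ≤ z := by rw [hzdef]; positivity
  set v : ℝ := Real.sqrt (1 + z) with hvdef
  have hv0 : 0 ≤ v := Real.sqrt_nonneg _
  have hv2 : v ^ 2 = 1 + z := Real.sq_sqrt (by linarith)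
  have hv1 : 1 ≤ v := by nlinarith
  rcases le_or_gt (m r + 4 * π * p r * r ^ 3) 0 with hA | hA
  · -- trivial case: total "effective mass" nonpositive
    have hxz : x + (4/3) * z ≤ 0 := by
      have he : x + (4/3) * z = (2/r) * (m r + 4 * π * p r * r ^ 3) := by
        rw [hxdef, hzdef]; field_simp; ring
      rw [he]
      exact mul_nonpos_of_nonneg_of_nonpos (by positivity) hA
    nlinarith
  · -- main case
    have hAnn : 0 ≤ m r + 4 * π * p r * r ^ 3 := hA.le
    have hxu : 0 < 1 - x := by linarith
    set u : ℝ := Real.sqrt (1 - x) with hudef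
    have hu : 0 < u := Real.sqrt_pos.mpr hxu
    have hu2 : u ^ 2 = 1 - x := Real.sq_sqrt hxu.le
    -- the derivative of ζ at r from the Einstein equation
    have hdζ : deriv ζ r = (m r + 4 * π * p r * r ^ 3) / (r ^ 2 * (1 - x)) * ζ r := by
      have h := heinstein r hrI
      rw [← hxdef] at h
      rwa [div_eq_iff hζr.ne'] at h
    have hdζnn : 0 ≤ deriv ζ r := by
      rw [hdζ]
      exact mul_nonneg (div_nonneg hAnn (by positivity)) hζr.le
    set F : ℝ := 1 / r * u * deriv ζ r with hFdef
    have hF0 : 0 ≤ F := by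
      rw [hFdef]
      exact mul_nonneg (mul_nonneg (by positivity) hu.le) hdζnn
    -- density comparison
    have hkey : ∀ s, 0 < s → s ≤ r → x * s ^ 2 / r ^ 2 ≤ 2 * m s / s := by
      intro s hs0 hsr
      have hsI : s ∈ Ioc (0:ℝ) R := ⟨hs0, hsr.trans hrR⟩
      have h := havg hsI hrI hsr
      simp only at h
      rw [div_le_div_iff₀ (by positivity) (by positivity)] at h
      have hmr : m r * s ^ 3 ≤ m s * r ^ 3 := by nlinarith
      rw [hxdef, div_le_div_iff₀ (by positivity) hs0]
      have hr' : r ≠ 0 := hr0.ne'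
      rw [div_mul_eq_mul_div, div_mul_eq_mul_div, div_le_iff₀ hr0]
      nlinarith
    set Φ : ℝ → ℝ := fun s => s ^ 2 / (1 + Real.sqrt (1 - x * s ^ 2 / r ^ 2)) with hΦdef
    have hΦcont : Continuous Φ := by
      rw [hΦdef]
      have hinner : Continuous (fun s : ℝ => 1 - x * s ^ 2 / r ^ 2) :=
        continuous_const.sub ((continuous_const.mul (continuous_pow 2)).div_const (r ^ 2))
      apply Continuous.div (continuous_pow 2)
        (continuous_const.add (Real.continuous_sqrt.comp hinner))
      intro s
      have := Real.sqrt_nonneg (1 - x * s ^ 2 / r ^ 2)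
      show (1:ℝ) + Real.sqrt (1 - x * s ^ 2 / r ^ 2) ≠ 0
      positivity
    have hΦderiv : ∀ s ∈ Ioo (0:ℝ) r,
        HasDerivAt Φ (s / Real.sqrt (1 - x * s ^ 2 / r ^ 2)) s := by
      intro s hs
      have hsI : s ∈ Ioc (0:ℝ) R := ⟨hs.1, hs.2.le.trans hrR⟩
      have has : 2 * m s / s < 1 := hcompact s hsI
      have hw : 0 < 1 - x * s ^ 2 / r ^ 2 := by
        have h2 := hkey s hs.1 hs.2.le
        linarith
      have hsw : 0 < Real.sqrt (1 - x * s ^ 2 / r ^ 2) := Real.sqrt_pos.mpr hw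
      have hw2 : Real.sqrt (1 - x * s ^ 2 / r ^ 2) ^ 2 = 1 - x * s ^ 2 / r ^ 2 :=
        Real.sq_sqrt hw.le
      have h1 : HasDerivAt (fun t => 1 - x * t ^ 2 / r ^ 2) (-(x * (2 * s) / r ^ 2)) s := by
        have h0 := (((hasDerivAt_pow 2 s).const_mul x).div_const (r ^ 2)).const_sub 1
        refine h0.congr_deriv ?_
        ring
      have h2 : HasDerivAt (fun t => 1 + Real.sqrt (1 - x * t ^ 2 / r ^ 2))
          (-(x * (2 * s) / r ^ 2) / (2 * Real.sqrt (1 - x * s ^ 2 / r ^ 2))) s :=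
        (h1.sqrt hw.ne').const_add 1
      have hden : (1 : ℝ) + Real.sqrt (1 - x * s ^ 2 / r ^ 2) ≠ 0 := by positivity
      have h3 := (hasDerivAt_pow 2 s).div h2 hden
      rw [hΦdef]
      refine h3.congr_deriv (Eq.symm ?_)
      set e := Real.sqrt (1 - x * s ^ 2 / r ^ 2) with hedef
      have he2 : e ^ 2 * r ^ 2 = r ^ 2 - x * s ^ 2 := by
        rw [hw2]; field_simp
      rw [div_eq_div_iff hsw.ne' (by positivity : ((1:ℝ) + e) ^ 2 ≠ 0)]
      field_simp
      ring_nf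
      linear_combination (-s) * he2 + s ^ 3 * hxdef
    -- monotonicity of the comparison function
    have hHmono : MonotoneOn (fun s => ζ s - F * Φ s) (Icc 0 r) := by
      apply monotoneOn_of_deriv_nonneg (convex_Icc 0 r)
      · exact (hζcont.mono (Icc_subset_Icc le_rfl hrR)).sub
          (continuous_const.mul hΦcont).continuousOn
      · rw [interior_Icc]
        intro s hs
        exact ((hζdiff s ⟨hs.1, hs.2.le.trans hrR⟩).sub
          ((hΦderiv s hs).const_mul F).differentiableAt).differentiableWithinAt
      · rw [interior_Icc]
        intro s hs
        have hsI : s ∈ Ioc (0:ℝ) R := ⟨hs.1, hs.2.le.trans hrR⟩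
        have hds := ((hζdiff s hsI).hasDerivAt.sub ((hΦderiv s hs).const_mul F))
        rw [show deriv (fun s => ζ s - F * Φ s) s = _ from hds.deriv]
        -- compare deriv ζ s with F * (s / √(1 - x s²/r²))
        have has : 0 < 1 - 2 * m s / s := by linarith [hcompact s hsI]
        have hsa : 0 < Real.sqrt (1 - 2 * m s / s) := Real.sqrt_pos.mpr has
        have hw : 0 < 1 - x * s ^ 2 / r ^ 2 := by linarith [hkey s hs.1 hs.2.le]
        have hsw : 0 < Real.sqrt (1 - x * s ^ 2 / r ^ 2) := Real.sqrt_pos.mpr hw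
        have hcmp : Real.sqrt (1 - 2 * m s / s) ≤ Real.sqrt (1 - x * s ^ 2 / r ^ 2) :=
          Real.sqrt_le_sqrt (by linarith [hkey s hs.1 hs.2.le])
        have hfs := hmono hsI hrI hs.2.le
        simp only at hfs
        rw [← hxdef, ← hudef, ← hFdef] at hfs
        have hdiv : s / Real.sqrt (1 - x * s ^ 2 / r ^ 2)
            ≤ s / Real.sqrt (1 - 2 * m s / s) := by
          gcongr
          exact hs.1.le
        have hc1 : F * (s / Real.sqrt (1 - x * s ^ 2 / r ^ 2))
            ≤ F * (s / Real.sqrt (1 - 2 * m s / s)) :=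
          mul_le_mul_of_nonneg_left hdiv hF0
        have hc2 : F * (s / Real.sqrt (1 - 2 * m s / s))
            ≤ (1 / s * Real.sqrt (1 - 2 * m s / s) * deriv ζ s)
              * (s / Real.sqrt (1 - 2 * m s / s)) :=
          mul_le_mul_of_nonneg_right hfs (div_nonneg hs.1.le hsa.le)
        have hc3 : (1 / s * Real.sqrt (1 - 2 * m s / s) * deriv ζ s)
            * (s / Real.sqrt (1 - 2 * m s / s)) = deriv ζ s := by
          field_simp
          rw [div_eq_iff hs.1.ne']
          ring
        linarith
    -- evaluate at the endpoints
    have hH := hHmono ⟨le_rfl, hr0.le⟩ ⟨hr0.le, le_rfl⟩ hr0.le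
    simp only at hH
    have hΦ0 : Φ 0 = 0 := by rw [hΦdef]; simp
    have hΦr : Φ r = r ^ 2 / (1 + u) := by
      rw [hΦdef, hudef]
      simp only
      rw [mul_div_assoc, div_self (by positivity : (r:ℝ) ^ 2 ≠ 0), mul_one]
    rw [hΦ0, mul_zero, sub_zero, hΦr] at hH
    -- extract the algebraic inequality
    have hFΦ : F * (r ^ 2 / (1 + u)) < ζ r := by linarith
    have hceq : F * (r ^ 2 / (1 + u))
        = ζ r * (u * (m r + 4 * π * p r * r ^ 3) / ((1 - x) * (1 + u) * r)) := by
      rw [hFdef, hdζ]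
      have h1u : (0:ℝ) < 1 + u := by linarith
      field_simp
    rw [hceq] at hFΦ
    have hc : u * (m r + 4 * π * p r * r ^ 3) / ((1 - x) * (1 + u) * r) < 1 := by
      have h' : ζ r * (u * (m r + 4 * π * p r * r ^ 3) / ((1 - x) * (1 + u) * r))
          < ζ r * 1 := by rw [mul_one]; exact hFΦ
      exact (mul_lt_mul_iff_right₀ hζr).mp h'
    have h1u : (0:ℝ) < 1 + u := by linarith
    have h6 : u * (m r + 4 * π * p r * r ^ 3) < (1 - x) * (1 + u) * r :=
      (div_lt_one (by positivity)).mp hc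
    -- convert to dimensionless form
    have hxr : x * r = 2 * m r := by rw [hxdef]; field_simp
    have hzr : z * r = 6 * π * p r * r ^ 3 := by rw [hzdef]; ring
    -- A = x*r/2 + (2/3) z r ; get 9x + 4z - 6 < 6u
    have h7 : (m r + 4 * π * p r * r ^ 3) < u * (1 + u) * r := by
      by_contra hcon
      push_neg at hcon
      nlinarith [mul_le_mul_of_nonneg_left hcon hu.le, h6, hu2]
    have ht : 9 * x + 4 * z - 6 < 6 * u := by nlinarith [h7, hxr, hzr, hu2, hr0]
    -- final algebra
    have hsq : 4 * v ^ 2 < (3 * u + 1) ^ 2 := by nlinarith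
    have h2v : 2 * v < 3 * u + 1 := by
      by_contra h
      push_neg at h
      nlinarith
    have h9 : (2 * v - 1) ^ 2 < 9 * u ^ 2 := by nlinarith
    nlinarith
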